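/- Persistence of the optimal action in the random-arrival model (equation (27)). Let V : X → ℝ be monotone with respect to ⪯ and let w ∈ W. Let X, X' ∈ X satisfy: A'_{b,k} = A_{b,k}, A'_{r,k} = A_{r,k} and D'_k = D_k for all k; A'_{d,k} ≥ A_{d,k} for every k with w_k = (1,2); and A'_{d,k} = A_{d,k} for every other k. If J_V(X, w) ≤ J_V(X, w'') for all w'' ∈ W, then J_V(X', w) ≤ J_V(X', w'') for all w'' ∈ W; i.e., if w is an optimal action at X then w is an optimal action at X'. -/

import Mathlib

namespace AoIRandom

/-- Per-device control action: idle `(0,0)`, continue the current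
in-transmission update `(1,1)`, or start transmitting the buffered update
`(1,2)`. -/
inductive Act : Type
  | idle : Act
  | cont : Act
  | new  : Act
  deriving DecidableEq

instance : Fintype Act :=
  ⟨{Act.idle, Act.cont, Act.new}, by intro a; cases a <;> simp⟩

/-- Per-device state `(A_b, A_d, A_r, D)`. -/
abbrev S : Type := ℕ × ℕ × ℕ × ℕ

/-- Success successor under `(1,1)` when a new update arrives. -/
def sCont1 (L Ahd Ahr : ℕ) (x : S) : S :=
  if x.2.2.2 = 1 then (1, 1, min (x.2.1 + 1) Ahr, L)
  else (1, min (x.2.1 + 1) Ahd, min (x.2.2.1 + 1) Ahr, x.2.2.2 - 1)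

/-- Success successor under `(1,1)` when no update arrives. -/
def sCont2 (L Ahb Ahd Ahr : ℕ) (x : S) : S :=
  if x.2.2.2 = 1 then
    (min (x.1 + 1) Ahb, min (x.1 + 1) Ahd, min (x.2.1 + 1) Ahr, L)
  else
    (min (x.1 + 1) Ahb, min (x.2.1 + 1) Ahd, min (x.2.2.1 + 1) Ahr, x.2.2.2 - 1)

/-- Failure successor under `(1,1)` when a new update arrives; this is also the
unscheduled successor `X¹_{k,un}` under `(0,0)`. -/
def fCont1 (Ahd Ahr : ℕ) (x : S) : S :=
  (1, min (x.2.1 + 1) Ahd, min (x.2.2.1 + 1) Ahr, x.2.2.2)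

/-- Failure successor under `(1,1)` when no update arrives; this is also the
unscheduled successor `X²_{k,un}` under `(0,0)`. -/
def fCont2 (Ahb Ahd Ahr : ℕ) (x : S) : S :=
  (min (x.1 + 1) Ahb, min (x.2.1 + 1) Ahd, min (x.2.2.1 + 1) Ahr, x.2.2.2)

/-- Success successor under `(1,2)` when a new update arrives. -/
def sNew1 (L Ahr : ℕ) (x : S) : S := (1, 1, min (x.2.2.1 + 1) Ahr, L - 1)

/-- Success successor under `(1,2)` when no update arrives. -/
def sNew2 (L Ahb Ahd Ahr : ℕ) (x : S) : S :=
  (min (x.1 + 1) Ahb, min (x.1 + 1) Ahd, min (x.2.2.1 + 1) Ahr, L - 1)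

/-- Failure successor under `(1,2)` when a new update arrives. -/
def fNew1 (L Ahr : ℕ) (x : S) : S := (1, 1, min (x.2.2.1 + 1) Ahr, L)

/-- Failure successor under `(1,2)` when no update arrives. -/
def fNew2 (L Ahb Ahd Ahr : ℕ) (x : S) : S :=
  (min (x.1 + 1) Ahb, min (x.1 + 1) Ahd, min (x.2.2.1 + 1) Ahr, L)

/-- Per-device transition kernel `P_k(x' | x, a)` in the random-arrival model. -/
def Pk (lam rho : ℝ) (L Ahb Ahd Ahr : ℕ) (x x' : S) : Act → ℝ
  | Act.idle =>
      rho * (if x' = fCont1 Ahd Ahr x then 1 else 0) +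
        (1 - rho) * (if x' = fCont2 Ahb Ahd Ahr x then 1 else 0)
  | Act.cont =>
      rho * lam * (if x' = sCont1 L Ahd Ahr x then 1 else 0) +
        rho * (1 - lam) * (if x' = fCont1 Ahd Ahr x then 1 else 0) +
        (1 - rho) * lam * (if x' = sCont2 L Ahb Ahd Ahr x then 1 else 0) +
        (1 - rho) * (1 - lam) * (if x' = fCont2 Ahb Ahd Ahr x then 1 else 0)
  | Act.new =>
      rho * lam * (if x' = sNew1 L Ahr x then 1 else 0) +
        rho * (1 - lam) * (if x' = fNew1 L Ahr x then 1 else 0) +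
        (1 - rho) * lam * (if x' = sNew2 L Ahb Ahd Ahr x then 1 else 0) +
        (1 - rho) * (1 - lam) * (if x' = fNew2 L Ahb Ahd Ahr x then 1 else 0)

/-- Per-device state space `{0,…,Âb} × {0,…,Âd} × {0,…,Âr} × {1,…,L}`. -/
def spaceS (L Ahb Ahd Ahr : ℕ) : Finset S :=
  Finset.range (Ahb + 1) ×ˢ
    (Finset.range (Ahd + 1) ×ˢ (Finset.range (Ahr + 1) ×ˢ Finset.Icc 1 L))

/-- Joint state space `X = X_1 × ⋯ × X_K`. -/
def jointSpace {K : ℕ} (L Ahb Ahd Ahr : Fin K → ℕ) : Finset (Fin K → S) :=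
  Fintype.piFinset fun k => spaceS (L k) (Ahb k) (Ahd k) (Ahr k)

/-- Joint transition kernel `P(X' | X, w) = ∏ₖ P_k(X'_k | X_k, w_k)`. -/
def Pjoint {K : ℕ} (lam rho : Fin K → ℝ) (L Ahb Ahd Ahr : Fin K → ℕ)
    (x x' : Fin K → S) (w : Fin K → Act) : ℝ :=
  ∏ k, Pk (lam k) (rho k) (L k) (Ahb k) (Ahd k) (Ahr k) (x k) (x' k) (w k)

/-- Feasible joint actions: at most `M` devices are scheduled. -/
def feasible (K M : ℕ) : Finset (Fin K → Act) :=
  Finset.univ.filter fun w => (Finset.univ.filter fun k => w k ≠ Act.idle).card ≤ M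

lemma feasible_nonempty (K M : ℕ) : (feasible K M).Nonempty := by
  refine ⟨fun _ => Act.idle, Finset.mem_filter.mpr ⟨Finset.mem_univ _, ?_⟩⟩
  simp

/-- The state–action cost `J_V(X, w) = Σₖ A_{r,k} + Σ_{X'∈X} P(X'|X,w) V(X')`. -/
def J {K : ℕ} (lam rho : Fin K → ℝ) (L Ahb Ahd Ahr : Fin K → ℕ)
    (V : (Fin K → S) → ℝ) (x : Fin K → S) (w : Fin K → Act) : ℝ :=
  (∑ k, ((x k).2.2.1 : ℝ)) +
    ∑ x' ∈ jointSpace L Ahb Ahd Ahr, Pjoint lam rho L Ahb Ahd Ahr x x' w * V x'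

/-- Componentwise order on per-device states: `A¹_b ≤ A²_b`, `A¹_d ≤ A²_d`,
`A¹_r ≤ A²_r` and `D¹ = D²`. -/
def xleS (x y : S) : Prop :=
  x.1 ≤ y.1 ∧ x.2.1 ≤ y.2.1 ∧ x.2.2.1 ≤ y.2.2.1 ∧ x.2.2.2 = y.2.2.2


/-- Outcome-indexed successor map: `o.1` = arrival, `o.2` = channel success. -/
def succA (Lk Ahb Ahd Ahr : ℕ) (a : Act) (o : Bool × Bool) (x : S) : S :=
  match a, o with
  | Act.idle, (true, _) => fCont1 Ahd Ahr x
  | Act.idle, (false, _) => fCont2 Ahb Ahd Ahr x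
  | Act.cont, (true, true) => sCont1 Lk Ahd Ahr x
  | Act.cont, (true, false) => fCont1 Ahd Ahr x
  | Act.cont, (false, true) => sCont2 Lk Ahb Ahd Ahr x
  | Act.cont, (false, false) => fCont2 Ahb Ahd Ahr x
  | Act.new, (true, true) => sNew1 Lk Ahr x
  | Act.new, (true, false) => fNew1 Lk Ahr x
  | Act.new, (false, true) => sNew2 Lk Ahb Ahd Ahr x
  | Act.new, (false, false) => fNew2 Lk Ahb Ahd Ahr x

/-- Probability of an outcome. -/
def pr (lam rho : ℝ) (o : Bool × Bool) : ℝ :=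
  (if o.1 then rho else 1 - rho) * (if o.2 then lam else 1 - lam)

lemma pr_nonneg {lam rho : ℝ} (h1 : 0 ≤ lam) (h2 : lam ≤ 1) (h3 : 0 ≤ rho)
    (h4 : rho ≤ 1) (o : Bool × Bool) : 0 ≤ pr lam rho o := by
  rcases o with ⟨_ | _, _ | _⟩ <;> simp [pr] <;> nlinarith

lemma sum4 (f : Bool × Bool → ℝ) :
    ∑ o : Bool × Bool, f o =
      f (true, true) + f (true, false) + f (false, true) + f (false, false) := by
  rw [Fintype.sum_prod_type]
  simp [Fintype.sum_bool]
  ring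

lemma Pk_eq (lam rho : ℝ) (Lk Ahb Ahd Ahr : ℕ) (x x' : S) (a : Act) :
    Pk lam rho Lk Ahb Ahd Ahr x x' a =
      ∑ o : Bool × Bool, pr lam rho o *
        (if x' = succA Lk Ahb Ahd Ahr a o x then 1 else 0) := by
  rw [sum4]
  cases a <;> simp only [Pk, pr, succA, eq_self_iff_true, Bool.false_eq_true, if_true, if_false] <;>
    split_ifs <;> simp_all <;> ring

lemma mem_spaceS {Lk Ahb Ahd Ahr : ℕ} {x : S} :
    x ∈ spaceS Lk Ahb Ahd Ahr ↔
      x.1 ≤ Ahb ∧ x.2.1 ≤ Ahd ∧ x.2.2.1 ≤ Ahr ∧ 1 ≤ x.2.2.2 ∧ x.2.2.2 ≤ Lk := by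
  simp [spaceS, Finset.mem_product, Nat.lt_succ_iff, Finset.mem_Icc, and_assoc]

lemma succA_mem {Lk Ahb Ahd Ahr : ℕ} (hL : 2 ≤ Lk) (hAb : 1 ≤ Ahb)
    (hAd : 1 ≤ Ahd) (hAr : 1 ≤ Ahr) {x : S} (hx : x ∈ spaceS Lk Ahb Ahd Ahr)
    (a : Act) (o : Bool × Bool) :
    succA Lk Ahb Ahd Ahr a o x ∈ spaceS Lk Ahb Ahd Ahr := by
  rw [mem_spaceS] at hx ⊢
  obtain ⟨h1, h2, h3, h4, h5⟩ := hx
  rcases a with _ | _ | _ <;> rcases o with ⟨_ | _, _ | _⟩ <;>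
    simp only [succA, sCont1, sCont2, fCont1, fCont2, sNew1, sNew2, fNew1,
      fNew2] <;> (try split_ifs) <;> simp <;> omega

lemma succA_mono {Lk Ahb Ahd Ahr : ℕ} {x y : S} (h : xleS x y) (a : Act)
    (o : Bool × Bool) :
    xleS (succA Lk Ahb Ahd Ahr a o x) (succA Lk Ahb Ahd Ahr a o y) := by
  obtain ⟨h1, h2, h3, h4⟩ := h
  rcases a with _ | _ | _ <;> rcases o with ⟨_ | _, _ | _⟩ <;>
    simp only [succA, sCont1, sCont2, fCont1, fCont2, sNew1, sNew2, fNew1,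
      fNew2, xleS, h4] <;> (try split_ifs) <;> simp_all <;> omega

lemma prod_ite_eq_ite {K : ℕ} (x' s : Fin K → S) :
    (∏ k, if x' k = s k then (1 : ℝ) else 0) = if x' = s then 1 else 0 := by
  by_cases h : x' = s
  · simp [h]
  · obtain ⟨k, hk⟩ := Function.ne_iff.mp h
    rw [if_neg h]
    exact Finset.prod_eq_zero (Finset.mem_univ k) (by simp [hk])

/-- Expansion of the expected value of `V` as a mixture over outcome
profiles. -/
lemma sum_expand {K : ℕ} (lam rho : Fin K → ℝ) (L Ahb Ahd Ahr : Fin K → ℕ)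
    (hL : ∀ k, 2 ≤ L k) (hAb : ∀ k, 1 ≤ Ahb k) (hAd : ∀ k, 1 ≤ Ahd k)
    (hAr : ∀ k, 1 ≤ Ahr k)
    (V : (Fin K → S) → ℝ) (x : Fin K → S) (hx : x ∈ jointSpace L Ahb Ahd Ahr)
    (w : Fin K → Act) :
    ∑ x' ∈ jointSpace L Ahb Ahd Ahr,
        Pjoint lam rho L Ahb Ahd Ahr x x' w * V x' =
      ∑ O : Fin K → Bool × Bool, (∏ k, pr (lam k) (rho k) (O k)) *
        V (fun k => succA (L k) (Ahb k) (Ahd k) (Ahr k) (w k) (O k) (x k)) := by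
  have hmem : ∀ O : Fin K → Bool × Bool,
      (fun k => succA (L k) (Ahb k) (Ahd k) (Ahr k) (w k) (O k) (x k)) ∈
        jointSpace L Ahb Ahd Ahr := by
    intro O
    rw [jointSpace, Fintype.mem_piFinset]
    intro k
    exact succA_mem (hL k) (hAb k) (hAd k) (hAr k)
      (Fintype.mem_piFinset.mp hx k) _ _
  have hP : ∀ x' : Fin K → S, Pjoint lam rho L Ahb Ahd Ahr x x' w =
      ∑ O : Fin K → Bool × Bool, (∏ k, pr (lam k) (rho k) (O k)) *
        (if x' = (fun k => succA (L k) (Ahb k) (Ahd k) (Ahr k) (w k) (O k) (x k))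
          then 1 else 0) := by
    intro x'
    rw [Pjoint]
    rw [Finset.prod_congr rfl fun k _ =>
      Pk_eq (lam k) (rho k) (L k) (Ahb k) (Ahd k) (Ahr k) (x k) (x' k) (w k)]
    rw [Finset.prod_univ_sum]
    refine Finset.sum_congr rfl fun O _ => ?_
    rw [Finset.prod_mul_distrib, ← prod_ite_eq_ite x'
      (fun k => succA (L k) (Ahb k) (Ahd k) (Ahr k) (w k) (O k) (x k))]
  calc ∑ x' ∈ jointSpace L Ahb Ahd Ahr,
        Pjoint lam rho L Ahb Ahd Ahr x x' w * V x'
      = ∑ x' ∈ jointSpace L Ahb Ahd Ahr, ∑ O : Fin K → Bool × Bool,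
          ((∏ k, pr (lam k) (rho k) (O k)) *
            (if x' = (fun k => succA (L k) (Ahb k) (Ahd k) (Ahr k) (w k) (O k)
              (x k)) then 1 else 0)) * V x' := by
        refine Finset.sum_congr rfl fun x' _ => ?_
        rw [hP x', Finset.sum_mul]
    _ = ∑ O : Fin K → Bool × Bool, ∑ x' ∈ jointSpace L Ahb Ahd Ahr,
          ((∏ k, pr (lam k) (rho k) (O k)) *
            (if x' = (fun k => succA (L k) (Ahb k) (Ahd k) (Ahr k) (w k) (O k)
              (x k)) then 1 else 0)) * V x' := Finset.sum_comm
    _ = ∑ O : Fin K → Bool × Bool, (∏ k, pr (lam k) (rho k) (O k)) *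
          V (fun k => succA (L k) (Ahb k) (Ahd k) (Ahr k) (w k) (O k) (x k)) := by
        refine Finset.sum_congr rfl fun O _ => ?_
        rw [Finset.sum_congr rfl (fun x' _ => by
          rw [mul_ite, mul_one, mul_zero, ite_mul, zero_mul] :
          ∀ x' ∈ jointSpace L Ahb Ahd Ahr, _ = _)]
        rw [Finset.sum_ite_eq' (jointSpace L Ahb Ahd Ahr) _
          (fun x' => (∏ k, pr (lam k) (rho k) (O k)) * V x'), if_pos (hmem O)]

lemma J_mono {K : ℕ} (lam rho : Fin K → ℝ) (L Ahb Ahd Ahr : Fin K → ℕ)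
    (hlam : ∀ k, 0 < lam k ∧ lam k ≤ 1) (hrho : ∀ k, 0 ≤ rho k ∧ rho k ≤ 1)
    (hL : ∀ k, 2 ≤ L k) (hAb : ∀ k, 1 ≤ Ahb k)
    (hAd : ∀ k, 1 ≤ Ahd k) (hAr : ∀ k, 1 ≤ Ahr k)
    (V : (Fin K → S) → ℝ)
    (hV : ∀ x1 ∈ jointSpace L Ahb Ahd Ahr, ∀ x2 ∈ jointSpace L Ahb Ahd Ahr,
      (∀ k, xleS (x1 k) (x2 k)) → V x1 ≤ V x2)
    (x y : Fin K → S)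
    (hx : x ∈ jointSpace L Ahb Ahd Ahr) (hy : y ∈ jointSpace L Ahb Ahd Ahr)
    (hxy : ∀ k, xleS (x k) (y k)) (w : Fin K → Act) :
    J lam rho L Ahb Ahd Ahr V x w ≤ J lam rho L Ahb Ahd Ahr V y w := by
  have hmem : ∀ z : Fin K → S, z ∈ jointSpace L Ahb Ahd Ahr →
      ∀ O : Fin K → Bool × Bool,
      (fun k => succA (L k) (Ahb k) (Ahd k) (Ahr k) (w k) (O k) (z k)) ∈
        jointSpace L Ahb Ahd Ahr := by
    intro z hz O
    rw [jointSpace, Fintype.mem_piFinset]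
    intro k
    exact succA_mem (hL k) (hAb k) (hAd k) (hAr k)
      (Fintype.mem_piFinset.mp hz k) _ _
  rw [J, J, sum_expand lam rho L Ahb Ahd Ahr hL hAb hAd hAr V x hx w,
    sum_expand lam rho L Ahb Ahd Ahr hL hAb hAd hAr V y hy w]
  refine add_le_add (Finset.sum_le_sum fun k _ => ?_)
    (Finset.sum_le_sum fun O _ => ?_)
  · exact_mod_cast (hxy k).2.2.1
  · refine mul_le_mul_of_nonneg_left ?_ (Finset.prod_nonneg fun k _ =>
      pr_nonneg (hlam k).1.le (hlam k).2 (hrho k).1 (hrho k).2 _)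
    exact hV _ (hmem x hx O) _ (hmem y hy O)
      (fun k => succA_mono (hxy k) _ _)

lemma J_persist {K : ℕ} (lam rho : Fin K → ℝ) (L Ahb Ahd Ahr : Fin K → ℕ)
    (V : (Fin K → S) → ℝ) (w : Fin K → Act) (x x' : Fin K → S)
    (hb : ∀ k, (x' k).1 = (x k).1)
    (hr : ∀ k, (x' k).2.2.1 = (x k).2.2.1)
    (hd : ∀ k, (x' k).2.2.2 = (x k).2.2.2)
    (hoth : ∀ k, w k ≠ Act.new → (x' k).2.1 = (x k).2.1) :
    J lam rho L Ahb Ahd Ahr V x' w = J lam rho L Ahb Ahd Ahr V x w := by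
  rw [J, J]
  congr 1
  · exact Finset.sum_congr rfl fun k _ => by rw [hr k]
  · refine Finset.sum_congr rfl fun x'' _ => ?_
    congr 1
    rw [Pjoint, Pjoint]
    refine Finset.prod_congr rfl fun k _ => ?_
    by_cases hk : w k = Act.new
    · rw [hk]
      simp only [Pk, sNew1, sNew2, fNew1, fNew2, hb k, hr k]
      rfl
    · have hxk : x' k = x k :=
        Prod.ext (hb k) (Prod.ext (hoth k hk) (Prod.ext (hr k) (hd k)))
      rw [hxk]

/-- equation (27): persistence of the optimal action in the
random-arrival model. -/
theorem persistence_of_optimal_action_random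
    (K M : ℕ) (hK : 1 ≤ K) (hM1 : 1 ≤ M) (hM2 : M ≤ K)
    (lam rho : Fin K → ℝ) (L Ahb Ahd Ahr : Fin K → ℕ)
    (hlam : ∀ k, 0 < lam k ∧ lam k ≤ 1) (hrho : ∀ k, 0 ≤ rho k ∧ rho k ≤ 1)
    (hL : ∀ k, 2 ≤ L k) (hAb : ∀ k, 1 ≤ Ahb k)
    (hAd : ∀ k, 1 ≤ Ahd k) (hAr : ∀ k, 1 ≤ Ahr k)
    (V : (Fin K → S) → ℝ)
    (hV : ∀ x1 ∈ jointSpace L Ahb Ahd Ahr, ∀ x2 ∈ jointSpace L Ahb Ahd Ahr,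
      (∀ k, xleS (x1 k) (x2 k)) → V x1 ≤ V x2)
    (w : Fin K → Act) (hw : w ∈ feasible K M)
    (x x' : Fin K → S)
    (hx : x ∈ jointSpace L Ahb Ahd Ahr) (hx' : x' ∈ jointSpace L Ahb Ahd Ahr)
    (hb : ∀ k, (x' k).1 = (x k).1)
    (hr : ∀ k, (x' k).2.2.1 = (x k).2.2.1)
    (hd : ∀ k, (x' k).2.2.2 = (x k).2.2.2)
    (hnew : ∀ k, w k = Act.new → (x k).2.1 ≤ (x' k).2.1)
    (hoth : ∀ k, w k ≠ Act.new → (x' k).2.1 = (x k).2.1)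
    (hopt : ∀ w'' ∈ feasible K M,
      J lam rho L Ahb Ahd Ahr V x w ≤ J lam rho L Ahb Ahd Ahr V x w'') :
    ∀ w'' ∈ feasible K M,
      J lam rho L Ahb Ahd Ahr V x' w ≤ J lam rho L Ahb Ahd Ahr V x' w'' := by
  intro w'' hw''
  have hxy : ∀ k, xleS (x k) (x' k) := by
    intro k
    refine ⟨(hb k).ge, ?_, (hr k).ge, (hd k).symm⟩
    by_cases hk : w k = Act.new
    · exact hnew k hk
    · exact (hoth k hk).ge
  calc J lam rho L Ahb Ahd Ahr V x' w
      = J lam rho L Ahb Ahd Ahr V x w :=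
        J_persist lam rho L Ahb Ahd Ahr V w x x' hb hr hd hoth
    _ ≤ J lam rho L Ahb Ahd Ahr V x w'' := hopt w'' hw''
    _ ≤ J lam rho L Ahb Ahd Ahr V x' w'' :=
        J_mono lam rho L Ahb Ahd Ahr hlam hrho hL hAb hAd hAr V hV x x'
          hx hx' hxy w''

end AoIRandom
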